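/- Suppose the potentials U_k are C¹ and the potentials V_k are C², that there exists R ≥ 0 such that V_k''(x) > 0 whenever |x| ≥ R (for every k), and that U_k'(x) → +∞ as x → +∞ and U_k'(x) → −∞ as x → −∞ (for every k). Then the set of solutions q ∈ ℝ^N of the equilibrium system is bounded. -/
import Mathlib


open Real Finset

noncomputable section

/-- Iterated Lie derivative `L_F^k g` of `g` along the vector field `F`. -/
def iterLie {E : Type*} [NormedAddCommGroup E] [NormedSpace ℝ E]
    (F : E → E) : ℕ → (E → ℝ) → E → ℝ
  | 0 => fun g => g
  | k + 1 => fun g x => fderiv ℝ (iterLie F k g) x (F x)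

/-- Phase space of a chain of `N` oscillators: `(p, q)`. -/
abbrev OscState (N : ℕ) : Type := (Fin N → ℝ) × (Fin N → ℝ)

/-- Position with 0-based natural index, `0` out of range. -/
def qc {N : ℕ} (x : OscState N) (i : ℕ) : ℝ := if h : i < N then x.2 ⟨i, h⟩ else 0

/-- Position with 0-based natural index, `0` out of range (for a configuration). -/
def qe {N : ℕ} (q : Fin N → ℝ) (i : ℕ) : ℝ := if h : i < N then q ⟨i, h⟩ else 0

/-- Hamiltonian of the oscillator chain. -/
def HamO (N : ℕ) (U V : ℕ → ℝ → ℝ) (x : OscState N) : ℝ :=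
  ∑ i : Fin N, (x.1 i) ^ 2 / 2 + ∑ i : Fin N, U i (x.2 i)
    + ∑ i ∈ Finset.range (N - 1), V i (qc x i - qc x (i + 1))

/-- Vector field of the oscillator chain with damping on the first oscillator. -/
def FOsc (N : ℕ) (U V : ℕ → ℝ → ℝ) (x : OscState N) : OscState N :=
  (fun i => -(if (i : ℕ) = 0 then x.1 i else 0) - deriv (U i) (x.2 i)
      + (if (i : ℕ) = 0 then 0 else deriv (V ((i : ℕ) - 1)) (qc x ((i : ℕ) - 1) - x.2 i))
      - deriv (V i) (x.2 i - qc x ((i : ℕ) + 1)),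
   fun i => x.1 i)

/-- The equilibrium system for the configuration `q`. -/
def IsEquilib (N : ℕ) (U V : ℕ → ℝ → ℝ) (q : Fin N → ℝ) : Prop :=
  ∀ i : Fin N,
    deriv (U i) (q i)
      - (if (i : ℕ) = 0 then 0 else deriv (V ((i : ℕ) - 1)) (qe q ((i : ℕ) - 1) - q i))
      + deriv (V i) (q i - qe q ((i : ℕ) + 1)) = 0

theorem stmt17 (N : ℕ) (hN : 2 ≤ N) (U V : ℕ → ℝ → ℝ)
    (hUsm : ∀ i < N, ContDiff ℝ 1 (U i)) (hVsm : ∀ i < N - 1, ContDiff ℝ 2 (V i))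
    (hVtop : ∀ i, N - 1 ≤ i → V i = fun _ => 0)
    (R : ℝ) (hR : 0 ≤ R)
    (hVconv : ∀ i < N - 1, ∀ x : ℝ, R ≤ |x| → 0 < deriv (deriv (V i)) x)
    (hUtop : ∀ i < N, Filter.Tendsto (deriv (U i)) Filter.atTop Filter.atTop)
    (hUbot : ∀ i < N, Filter.Tendsto (deriv (U i)) Filter.atBot Filter.atBot) :
    Bornology.IsBounded {q : Fin N → ℝ | IsEquilib N U V q} := by

  -- Bound on |V j'| on [-R, R]
  have hVd : ∀ j : ℕ, ∃ C, 0 ≤ C ∧ ∀ x ∈ Set.Icc (-R) R, |deriv (V j) x| ≤ C := by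
    intro j
    by_cases hj : j < N - 1
    · obtain ⟨C, hC⟩ := (isCompact_Icc (a := -R) (b := R)).exists_bound_of_continuousOn
        (((hVsm j hj).continuous_deriv (by norm_num)).continuousOn)
      exact ⟨max C 0, le_max_right _ _, fun x hx => (hC x hx).trans (le_max_left _ _)⟩
    · refine ⟨0, le_refl _, fun x _ => ?_⟩
      rw [hVtop j (not_lt.1 hj)]
      simp
  choose f hf0 hfB using hVd
  set A : ℝ := ∑ j ∈ Finset.range N, f j with hAdef
  have hA0 : 0 ≤ A := Finset.sum_nonneg fun i _ => hf0 i
  have hAge : ∀ j, j < N → f j ≤ A := fun j hj =>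
    Finset.single_le_sum (fun i _ => hf0 i) (Finset.mem_range.mpr hj)
  have hVcont : ∀ j, j < N - 1 → Continuous (deriv (V j)) := fun j hj =>
    (hVsm j hj).continuous_deriv (by norm_num)
  -- V j' ≤ A for x ≤ 0
  have hVle : ∀ j, j < N → ∀ x : ℝ, x ≤ 0 → deriv (V j) x ≤ A := by
    intro j hj x hx
    by_cases hj' : j < N - 1
    · by_cases hxr : -R ≤ x
      · exact (abs_le.mp (hfB j x ⟨hxr, hx.trans hR⟩)).2.trans (hAge j hj)
      · push_neg at hxr
        have hmono : StrictMonoOn (deriv (V j)) (Set.Icc x (-R)) := by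
          apply strictMonoOn_of_deriv_pos (convex_Icc _ _)
            ((hVcont j hj').continuousOn)
          intro y hy
          rw [interior_Icc] at hy
          have hy2 := hy.2
          have : |y| = -y := abs_of_neg (by linarith)
          exact hVconv j hj' y (by rw [this]; linarith)
        have h1 : deriv (V j) x < deriv (V j) (-R) :=
          hmono ⟨le_refl _, hxr.le⟩ ⟨hxr.le, le_refl _⟩ hxr
        have h2 : |deriv (V j) (-R)| ≤ f j := hfB j (-R) ⟨le_refl _, by linarith⟩
        have := (abs_le.mp h2).2
        have := hAge j hj
        linarith
    · rw [hVtop j (not_lt.1 hj')]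
      simpa using hA0
  -- V j' ≥ -A for x ≥ 0
  have hVge : ∀ j, j < N → ∀ x : ℝ, 0 ≤ x → -A ≤ deriv (V j) x := by
    intro j hj x hx
    by_cases hj' : j < N - 1
    · by_cases hxr : x ≤ R
      · have h2 := (abs_le.mp (hfB j x ⟨by linarith, hxr⟩)).1
        have := hAge j hj
        linarith
      · push_neg at hxr
        have hmono : StrictMonoOn (deriv (V j)) (Set.Icc R x) := by
          apply strictMonoOn_of_deriv_pos (convex_Icc _ _)
            ((hVcont j hj').continuousOn)
          intro y hy
          rw [interior_Icc] at hy
          have hy1 := hy.1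
          exact hVconv j hj' y (by rw [abs_of_nonneg (by linarith)]; linarith)
        have h1 : deriv (V j) R < deriv (V j) x :=
          hmono ⟨le_refl _, hxr.le⟩ ⟨hxr.le, le_refl _⟩ hxr
        have h2 : |deriv (V j) R| ≤ f j := hfB j R ⟨by linarith, le_refl _⟩
        have := (abs_le.mp h2).1
        have := hAge j hj
        linarith
    · rw [hVtop j (not_lt.1 hj')]
      simpa using hA0
  -- thresholds for U'
  have hU : ∀ i : ℕ, ∃ M, 0 ≤ M ∧ (i < N → ∀ x : ℝ,
      (M ≤ x → 2 * A < deriv (U i) x) ∧ (x ≤ -M → deriv (U i) x < -(2 * A))) := by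
    intro i
    by_cases hi : i < N
    · obtain ⟨a, ha⟩ := Filter.eventually_atTop.1 ((hUtop i hi).eventually_gt_atTop (2 * A))
      obtain ⟨b, hb⟩ := Filter.eventually_atBot.1 ((hUbot i hi).eventually_lt_atBot (-(2 * A)))
      refine ⟨max a (max (-b) 0), le_max_of_le_right (le_max_right _ _), fun _ x =>
        ⟨fun hx => ha x (le_trans (le_max_left _ _) hx), fun hx => hb x ?_⟩⟩
      have h1 : -b ≤ max a (max (-b) 0) := le_max_of_le_right (le_max_left _ _)
      linarith
    · exact ⟨0, le_refl _, fun h => absurd h hi⟩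
  choose g hg0 hgB using hU
  set Mt : ℝ := ∑ i ∈ Finset.range N, g i with hMtdef
  have hMt0 : 0 ≤ Mt := Finset.sum_nonneg fun i _ => hg0 i
  have hMtge : ∀ i, i < N → g i ≤ Mt := fun i hi =>
    Finset.single_le_sum (fun k _ => hg0 k) (Finset.mem_range.mpr hi)
  -- main argument
  rw [isBounded_iff_forall_norm_le]
  refine ⟨Mt, fun q hq => ?_⟩
  haveI : NeZero N := ⟨by omega⟩
  have hqi : ∀ i : Fin N, deriv (U (i : ℕ)) (q i) =
      (if (i : ℕ) = 0 then 0 else deriv (V ((i : ℕ) - 1)) (qe q ((i : ℕ) - 1) - q i))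
        - deriv (V (i : ℕ)) (q i - qe q ((i : ℕ) + 1)) := by
    intro i
    have := hq i
    linarith
  have hmax : ∀ i : Fin N, q i ≤ Mt := by
    obtain ⟨m, hm⟩ := Finite.exists_max q
    intro i
    refine le_trans (hm i) ?_
    by_contra hcon
    push_neg at hcon
    have hUm : 2 * A < deriv (U (m : ℕ)) (q m) :=
      ((hgB m m.isLt (q m)).1) (le_trans (hMtge m m.isLt) hcon.le)
    have ht1 : (if (m : ℕ) = 0 then 0 else
        deriv (V ((m : ℕ) - 1)) (qe q ((m : ℕ) - 1) - q m)) ≤ A := by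
      split_ifs with h0
      · exact hA0
      · have hlt : (m : ℕ) - 1 < N := by omega
        have harg : qe q ((m : ℕ) - 1) - q m ≤ 0 := by
          rw [qe, dif_pos hlt]
          have := hm ⟨(m : ℕ) - 1, hlt⟩
          linarith
        exact hVle _ (by omega) _ harg
    have ht2 : -A ≤ deriv (V (m : ℕ)) (q m - qe q ((m : ℕ) + 1)) := by
      by_cases hlt : (m : ℕ) + 1 < N
      · have harg : 0 ≤ q m - qe q ((m : ℕ) + 1) := by
          rw [qe, dif_pos hlt]
          have := hm ⟨(m : ℕ) + 1, hlt⟩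
          linarith
        exact hVge _ m.isLt _ harg
      · rw [hVtop (m : ℕ) (by omega)]
        simpa using hA0
    have := hqi m
    linarith
  have hmin : ∀ i : Fin N, -Mt ≤ q i := by
    obtain ⟨l, hl⟩ := Finite.exists_max (fun i => -q i)
    have hl' : ∀ i, q l ≤ q i := fun i => by have := hl i; simp at this; linarith
    intro i
    refine le_trans ?_ (hl' i)
    by_contra hcon
    push_neg at hcon
    have hUl : deriv (U (l : ℕ)) (q l) < -(2 * A) :=
      ((hgB l l.isLt (q l)).2) (by have := hMtge l l.isLt; linarith)
    have ht1 : -A ≤ (if (l : ℕ) = 0 then 0 else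
        deriv (V ((l : ℕ) - 1)) (qe q ((l : ℕ) - 1) - q l)) := by
      split_ifs with h0
      · linarith
      · have hlt : (l : ℕ) - 1 < N := by omega
        have harg : 0 ≤ qe q ((l : ℕ) - 1) - q l := by
          rw [qe, dif_pos hlt]
          have := hl' ⟨(l : ℕ) - 1, hlt⟩
          linarith
        exact hVge _ (by omega) _ harg
    have ht2 : deriv (V (l : ℕ)) (q l - qe q ((l : ℕ) + 1)) ≤ A := by
      by_cases hlt : (l : ℕ) + 1 < N
      · have harg : q l - qe q ((l : ℕ) + 1) ≤ 0 := by
          rw [qe, dif_pos hlt]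
          have := hl' ⟨(l : ℕ) + 1, hlt⟩
          linarith
        exact hVle _ l.isLt _ harg
      · rw [hVtop (l : ℕ) (by omega)]
        simpa using hA0
    have := hqi l
    linarith
  rw [pi_norm_le_iff_of_nonneg hMt0]
  intro i
  rw [Real.norm_eq_abs, abs_le]
  exact ⟨hmin i, hmax i⟩
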